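/- Let M(z) = b/(cz+d) with b, c ≠ 0, and let g(z) = 1/St_M(1/z) be the conjugation of Stirling's method by inversion. Then g(0) = 0 and g'(0) = 1/2; i.e., ∞ is an attracting (but not superattracting) fixed point of St_M with multiplier 1/2. -/

import Mathlib

lemma deriv_mobius (b c d p : ℂ) (h : c * p + d ≠ 0) :
    deriv (fun z : ℂ => b / (c * z + d)) p = -(b * c) / (c * p + d) ^ 2 := by
  have h1 : HasDerivAt (fun z : ℂ => c * z + d) c p := by
    simpa using ((hasDerivAt_id p).const_mul c).add_const d
  have h2 : HasDerivAt (fun z : ℂ => b / (c * z + d))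
      ((0 * (c * p + d) - b * c) / (c * p + d) ^ 2) p :=
    (hasDerivAt_const p b).div h1 h
  rw [h2.deriv]; ring

/-- For `M z = b/(cz+d)` with `b, c ≠ 0`, the point `∞` is an attracting
(but not superattracting) fixed point of Stirling's method with multiplier
`1/2`: the conjugation `g z = 1/St_M(1/z)` extends analytically through `0`
with `g 0 = 0` and `g' 0 = 1/2`. -/
theorem stirling_mobius_a_zero_infinity_attracting (b c d : ℂ) (hb : b ≠ 0)
    (hc : c ≠ 0) :
    let M : ℂ → ℂ := fun z => b / (c * z + d)
    let St : ℂ → ℂ := fun z => z - M z / deriv M (z - M z)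
    ∃ g : ℂ → ℂ, AnalyticAt ℂ g 0 ∧
      g =ᶠ[nhdsWithin 0 {(0 : ℂ)}ᶜ] (fun z => 1 / St (1 / z)) ∧
      g 0 = 0 ∧ deriv g 0 = 1 / 2 := by
  intro M St
  set N : ℂ → ℂ := fun z => c * z * (c + d * z) ^ 3 with hN
  set D : ℂ → ℂ := fun z => c * (c + d * z) ^ 3 + ((c + d * z) ^ 2 - b * c * z ^ 2) ^ 2 with hD
  have hD0 : D 0 = 2 * c ^ 4 := by simp [hD]; ring
  have hD0ne : D 0 ≠ 0 := by
    rw [hD0]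
    exact mul_ne_zero two_ne_zero (pow_ne_zero _ hc)
  refine ⟨fun z => N z / D z, ?_, ?_, ?_, ?_⟩
  · have hNa : AnalyticAt ℂ N 0 := by
      exact (analyticAt_const.mul analyticAt_id).mul
        ((analyticAt_const.add (analyticAt_const.mul analyticAt_id)).pow 3)
    have hDa : AnalyticAt ℂ D 0 := by
      exact (analyticAt_const.mul
          ((analyticAt_const.add (analyticAt_const.mul analyticAt_id)).pow 3)).add
        ((((analyticAt_const.add (analyticAt_const.mul analyticAt_id)).pow 2).sub
          (analyticAt_const.mul (analyticAt_id.pow 2))).pow 2)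
    exact hNa.div hDa hD0ne
  · -- eventual equality
    have hev : ∀ᶠ z in nhds (0 : ℂ), (c + d * z) ≠ 0 ∧
        ((c + d * z) ^ 2 - b * c * z ^ 2) ≠ 0 ∧ D z ≠ 0 := by
      have c1 : ContinuousAt (fun z : ℂ => c + d * z) 0 := by fun_prop
      have c2 : ContinuousAt (fun z : ℂ => (c + d * z) ^ 2 - b * c * z ^ 2) 0 := by fun_prop
      have c3 : ContinuousAt D 0 := by fun_prop
      have e1 := c1.eventually_ne (by simpa using hc)
      have e2 := c2.eventually_ne (show (c + d * 0) ^ 2 - b * c * 0 ^ 2 ≠ 0 by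
        simpa using pow_ne_zero 2 hc)
      have e3 := c3.eventually_ne hD0ne
      filter_upwards [e1, e2, e3] with z h1 h2 h3
      exact ⟨h1, h2, h3⟩
    filter_upwards [hev.filter_mono nhdsWithin_le_nhds, self_mem_nhdsWithin] with z hz hz0
    obtain ⟨hP, hQ, hDz⟩ := hz
    have hz0 : z ≠ 0 := hz0
    -- compute St (1/z)
    have hw : c * (1 / z) + d = (c + d * z) / z := by field_simp
    have hwne : c * (1 / z) + d ≠ 0 := by
      rw [hw]; exact div_ne_zero hP hz0
    have hM : M (1 / z) = b * z / (c + d * z) := by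
      show b / (c * (1 / z) + d) = _
      rw [hw]; field_simp
    have hp : c * (1 / z - M (1 / z)) + d
        = ((c + d * z) ^ 2 - b * c * z ^ 2) / (z * (c + d * z)) := by
      rw [hM, div_sub_div _ _ hz0 hP, eq_div_iff (mul_ne_zero hz0 hP)]; field_simp; ring
    have hpne : c * (1 / z - M (1 / z)) + d ≠ 0 := by
      rw [hp]; exact div_ne_zero hQ (mul_ne_zero hz0 hP)
    have hder : deriv M (1 / z - M (1 / z))
        = -(b * c * z ^ 2 * (c + d * z) ^ 2 / ((c + d * z) ^ 2 - b * c * z ^ 2) ^ 2) := by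
      rw [show deriv M = deriv (fun z : ℂ => b / (c * z + d)) from rfl,
        deriv_mobius b c d _ hpne, hp]
      field_simp
    have hNz : c * z * (c + d * z) ^ 3 ≠ 0 :=
      mul_ne_zero (mul_ne_zero hc hz0) (pow_ne_zero _ hP)
    have hX : b * c * z ^ 2 * (c + d * z) ^ 2 ≠ 0 :=
      mul_ne_zero (mul_ne_zero (mul_ne_zero hb hc) (pow_ne_zero _ hz0)) (pow_ne_zero _ hP)
    have hquot : M (1 / z) / deriv M (1 / z - M (1 / z))
        = -(((c + d * z) ^ 2 - b * c * z ^ 2) ^ 2 / (c * z * (c + d * z) ^ 3)) := by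
      rw [hder, div_neg, neg_inj, hM, div_div_eq_mul_div, div_mul_eq_mul_div, div_div,
        div_eq_div_iff (mul_ne_zero hP hX) hNz]
      ring
    have hStv : St (1 / z) = D z / N z := by
      show 1 / z - M (1 / z) / deriv M (1 / z - M (1 / z)) = D z / N z
      rw [hquot, sub_neg_eq_add, div_add_div _ _ hz0 hNz, hD, hN,
        div_eq_div_iff (mul_ne_zero hz0 hNz) hNz]
      ring
    have hNz' : N z ≠ 0 := hNz
    show N z / D z = 1 / St (1 / z)
    rw [hStv, one_div_div]
  · simp [hN, hD]
  · -- derivative at 0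
    have h1 : HasDerivAt (fun z : ℂ => c + d * z) d 0 := by
      exact ((hasDerivAt_const (0:ℂ) c).add ((hasDerivAt_id (0:ℂ)).const_mul d)).congr_deriv (by simp)
    have hNd : HasDerivAt N (c ^ 4) 0 := by
      have := ((hasDerivAt_id (0:ℂ)).const_mul c).mul (h1.pow 3)
      refine this.congr_deriv ?_
      simp; ring
    have hDd : HasDerivAt D (7 * c ^ 3 * d) 0 := by
      have h2 : HasDerivAt (fun z : ℂ => (c + d * z) ^ 2 - b * c * z ^ 2)
          (2 * (c + d * 0) ^ 1 * d - b * c * (2 * 0 ^ 1 * 1)) 0 :=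
        (h1.pow 2).sub (((hasDerivAt_id (0:ℂ)).pow 2).const_mul (b * c))
      have := ((h1.pow 3).const_mul c).add (h2.pow 2)
      refine this.congr_deriv ?_
      simp; ring
    have := hNd.div hDd hD0ne
    rw [show (fun z => N z / D z) = N / D from rfl, this.deriv]
    rw [hD0]
    simp [hN]
    field_simp
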